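/- Every irreducible λ-quiddity over the finite field 𝔽₉ with 9 elements has size at most 32. -/

import Mathlib

/-- The matrix `[[a, -1], [1, 0]]`. -/
def mMat {A : Type*} [CommRing A] (a : A) : Matrix (Fin 2) (Fin 2) A := !![a, -1; 1, 0]

/-- `M_n(a₁, …, aₙ) = mMat aₙ * ⋯ * mMat a₁`, for the tuple given as a list `[a₁, …, aₙ]`. -/
def mProd {A : Type*} [CommRing A] (l : List A) : Matrix (Fin 2) (Fin 2) A :=
  ((l.map mMat).reverse).prod

/-- The sum `(a₁,…,aₙ) ⊕ (b₁,…,b_m) = (a₁+b_m, a₂,…,a_{n−1}, aₙ+b₁, b₂,…,b_{m−1})`. -/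
def oplus {A : Type*} [CommRing A] (a b : List A) : List A :=
  (a.headD 0 + b.getLastD 0) ::
    (a.dropLast.tail ++ (a.getLastD 0 + b.headD 0) :: b.dropLast.tail)

/-- Two tuples are equivalent if one is a cyclic rotation of the other or of its reversal. -/
def TupEquiv {A : Type*} (a b : List A) : Prop :=
  (∃ k, b = a.rotate k) ∨ (∃ k, b = a.reverse.rotate k)

/-- A λ-quiddity over `R ⊆ A`: all entries lie in `R` and `M_n(a₁,…,aₙ) = ± Id`. -/
def IsQuiddity {A : Type*} [CommRing A] (R : Set A) (c : List A) : Prop :=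
  (∀ x ∈ c, x ∈ R) ∧ (mProd c = 1 ∨ mProd c = -1)

/-- A λ-quiddity `c` over `R` is reducible if `c ∼ a ⊕ b` with `a ∈ R^m`, `m ≥ 3`,
and `b` a λ-quiddity over `R` of size `l ≥ 3`. -/
def IsReducible {A : Type*} [CommRing A] (R : Set A) (c : List A) : Prop :=
  ∃ a b : List A, 3 ≤ a.length ∧ 3 ≤ b.length ∧ (∀ x ∈ a, x ∈ R) ∧
    IsQuiddity R b ∧ TupEquiv c (oplus a b)

/-- An irreducible λ-quiddity over `R`: a λ-quiddity of size `≥ 3` which is not reducible. -/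
def IrreducibleQuiddity {A : Type*} [CommRing A] (R : Set A) (c : List A) : Prop :=
  IsQuiddity R c ∧ 3 ≤ c.length ∧ ¬ IsReducible R c

/-- The continuant `K_i(a₁,…,a_i)`, determinant of the tridiagonal matrix with diagonal
`a₁,…,a_i` and off-diagonal entries `1`; `K₀ = 1`. -/
def cont {A : Type*} [CommRing A] : List A → A
  | [] => 1
  | [a] => a
  | a :: b :: l => a * cont (b :: l) - cont l

/-- The symplectic form on `F²`. -/
def omeg {F : Type*} [CommRing F] (u w : Fin 2 → F) : F := u 0 * w 1 - u 1 * w 0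

namespace QAux19

section ring
variable {A : Type*} [CommRing A]

lemma mProd_singleton (a : A) : mProd [a] = mMat a := by simp [mProd]

lemma mProd_append (u v : List A) : mProd (u ++ v) = mProd v * mProd u := by
  simp [mProd]

lemma mProd_cons (a : A) (l : List A) : mProd (a :: l) = mProd l * mMat a := by
  have := mProd_append [a] l
  simpa [mProd_singleton] using this

lemma det_mMat (a : A) : (mMat a).det = 1 := by simp [mMat, Matrix.det_fin_two_of]

lemma det_mProd (l : List A) : (mProd l).det = 1 := by
  induction l with
  | nil => simp [mProd]
  | cons a l ih => rw [mProd_cons, Matrix.det_mul, ih, det_mMat, one_mul]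

lemma key_solve (S : Matrix (Fin 2) (Fin 2) A) (hdet : S.det = 1) (δ : A) (hδ : δ * δ = 1)
    (h00 : S 0 0 = δ) :
    mMat (δ * S 1 0) * S * mMat (-(δ * S 0 1)) = (-δ) • 1 := by
  rw [Matrix.det_fin_two, h00] at hdet
  ext i j
  fin_cases i <;> fin_cases j <;>
    simp [mMat, Matrix.mul_apply, Matrix.vecMul, dotProduct, Fin.sum_univ_two,
      Matrix.one_apply, h00, Matrix.vecHead, Matrix.vecTail]
  · linear_combination (S 1 1 - δ * S 1 0 * S 0 1) * hδ + (-δ) * hdet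
  · linear_combination (-(S 1 0)) * hδ
  · linear_combination (-(S 0 1)) * hδ

lemma entry_L (S P Q : Matrix (Fin 2) (Fin 2) A) (h : Q = S * P) (hdet : P.det = 1) :
    S 0 0 = Q 0 0 * P 1 1 - Q 0 1 * P 1 0 := by
  rw [Matrix.det_fin_two] at hdet
  have h1 : Q 0 0 = S 0 0 * P 0 0 + S 0 1 * P 1 0 := by
    rw [h]; simp [Matrix.mul_apply, Fin.sum_univ_two]
  have h2 : Q 0 1 = S 0 0 * P 0 1 + S 0 1 * P 1 1 := by
    rw [h]; simp [Matrix.mul_apply, Fin.sum_univ_two]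
  rw [h1, h2]; linear_combination (-(S 0 0)) * hdet

lemma mProd_completion (s : List A) (x y : A) :
    mProd (x :: (s ++ [y])) = mMat y * mProd s * mMat x := by
  rw [mProd_cons, mProd_append, mProd_singleton]

lemma oplus_eq (t s : List A) (x y : A) (ht : 2 ≤ t.length) :
    oplus ((t.headD 0 - y) :: ((t.drop 1).dropLast ++ [t.getLastD 0 - x]))
      (x :: (s ++ [y])) = t ++ s := by
  have htne : t ≠ [] := by rintro rfl; simp at ht
  unfold oplus
  have hb_last : (x :: (s ++ [y])).getLastD 0 = y := by
    rw [show x :: (s ++ [y]) = (x :: s) ++ [y] by simp, List.getLastD_concat]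
  have hb_dropLast : (x :: (s ++ [y])).dropLast = x :: s := by
    rw [show x :: (s ++ [y]) = (x :: s) ++ [y] by simp, List.dropLast_concat]
  have ha_last : (((t.headD 0 - y) :: ((t.drop 1).dropLast ++ [t.getLastD 0 - x]))).getLastD 0
      = t.getLastD 0 - x := by
    rw [show (t.headD 0 - y) :: ((t.drop 1).dropLast ++ [t.getLastD 0 - x])
        = ((t.headD 0 - y) :: (t.drop 1).dropLast) ++ [t.getLastD 0 - x] by simp,
      List.getLastD_concat]
  have ha_dropLast : ((t.headD 0 - y) :: ((t.drop 1).dropLast ++ [t.getLastD 0 - x])).dropLast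
      = (t.headD 0 - y) :: (t.drop 1).dropLast := by
    rw [show (t.headD 0 - y) :: ((t.drop 1).dropLast ++ [t.getLastD 0 - x])
        = ((t.headD 0 - y) :: (t.drop 1).dropLast) ++ [t.getLastD 0 - x] by simp,
      List.dropLast_concat]
  rw [hb_last, hb_dropLast, ha_last, ha_dropLast]
  simp only [List.headD_cons, List.tail_cons]
  have h1 : t.headD 0 - y + y = t.headD 0 := by ring
  have h2 : t.getLastD 0 - x + x = t.getLastD 0 := by ring
  rw [h1, h2]
  have hts : t = t.headD 0 :: ((t.drop 1).dropLast ++ [t.getLastD 0]) := by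
    obtain ⟨hd, tl, rfl⟩ := List.exists_cons_of_ne_nil htne
    simp only [List.headD_cons, List.drop_one, List.tail_cons, List.cons.injEq, true_and]
    rcases List.eq_nil_or_concat tl with rfl | ⟨l', z, rfl⟩
    · simp at ht
    · rw [List.concat_eq_append, show hd :: (l' ++ [z]) = (hd :: l') ++ [z] by simp,
        List.getLastD_concat, List.dropLast_concat]
  conv_rhs => rw [hts]
  simp

lemma seg_eq (c : List A) (p k : ℕ) (hp : p ≤ c.length) (hk : k ≤ c.length) :
    (c.rotate p).take k = ((c ++ c).drop p).take k := by
  rw [List.rotate_eq_drop_append_take hp, List.drop_append,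
    show p - c.length = 0 by omega, List.drop_zero]
  rw [List.take_append, List.take_append]
  congr 1
  rw [List.take_take, List.length_drop]
  congr 1
  omega

end ring

lemma reducible_of_segment {F : Type*} [Field F] (c : List F)
    (j k : ℕ) (hk1 : 1 ≤ k) (hk3 : k + 3 ≤ c.length)
    (h : mProd ((c.rotate j).take k) 0 0 = 1 ∨ mProd ((c.rotate j).take k) 0 0 = -1) :
    IsReducible Set.univ c := by
  set s := (c.rotate j).take k with hs
  set t := (c.rotate j).drop k with htdef
  set S := mProd s with hS
  have hrotlen : (c.rotate j).length = c.length := List.length_rotate c j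
  have hkle : k ≤ (c.rotate j).length := by omega
  have hslen : s.length = k := by rw [hs, List.length_take]; omega
  have htlen : t.length = c.length - k := by rw [htdef, List.length_drop]; omega
  set δ := S 0 0 with hδdef
  have hδmul : δ * δ = 1 := by rcases h with h | h <;> rw [h] <;> ring
  set x := -(δ * S 0 1) with hx
  set y := δ * S 1 0 with hy
  set b := x :: (s ++ [y]) with hb
  set a := (t.headD 0 - y) :: ((t.drop 1).dropLast ++ [t.getLastD 0 - x]) with ha
  have hprodb : mProd b = (-δ) • 1 := by
    rw [hb, mProd_completion, hx, hy]
    exact key_solve S (det_mProd s) δ hδmul rfl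
  refine ⟨a, b, ?_, ?_, fun z _ => Set.mem_univ z, ⟨fun z _ => Set.mem_univ z, ?_⟩, ?_⟩
  · rw [ha]
    simp only [List.length_cons, List.length_append, List.length_dropLast, List.length_drop,
      List.length_singleton]
    omega
  · rw [hb]
    simp only [List.length_cons, List.length_append, List.length_singleton]
    omega
  · rw [hprodb]
    rcases h with h | h
    · right; rw [h]; simp
    · left; rw [h]; simp
  · left
    refine ⟨j + k, ?_⟩
    rw [← List.rotate_rotate, List.rotate_eq_drop_append_take hkle]
    rw [ha, hb, oplus_eq t s x y (by omega)]

section count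
variable {F : Type*} [Field F] [Fintype F] [DecidableEq F]

lemma three_eq_zero (hF : Fintype.card F = 9) : (3 : F) = 0 := by
  have h := FiniteField.cast_card_eq_zero F
  rw [hF] at h
  have h9 : (3 : F) * 3 = 0 := by norm_num at h ⊢; linear_combination h
  exact mul_self_eq_zero.mp h9

lemma two_ne_zero' (hF : Fintype.card F = 9) : (2 : F) ≠ 0 := by
  intro h
  have h3 := three_eq_zero hF
  have h1 : (1 : F) = 0 := by linear_combination h3 - h
  exact one_ne_zero h1

lemma one_ne_negone (hF : Fintype.card F = 9) : (1 : F) ≠ -1 := by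
  intro h
  exact two_ne_zero' hF (by linear_combination h)

lemma fibcard (hF : Fintype.card F = 9) (u : Fin 2 → F) (hu : u ≠ 0) (a : F) :
    (Finset.univ.filter (fun w : Fin 2 → F => omeg u w = a)).card = 9 := by
  classical
  have hcase : u 0 ≠ 0 ∨ u 1 ≠ 0 := by
    by_contra hcon
    push_neg at hcon
    exact hu (funext fun i => by fin_cases i <;> simp [hcon.1, hcon.2])
  have hFcard : (Finset.univ : Finset F).card = 9 := by rw [Finset.card_univ, hF]
  rcases hcase with h0 | h1
  · rw [← hFcard]
    apply Finset.card_bij' (fun w _ => w 0) (fun t _ => ![t, (a + u 1 * t) / u 0])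
    · intro w hw; exact Finset.mem_univ _
    · intro t ht
      rw [Finset.mem_filter]
      refine ⟨Finset.mem_univ _, ?_⟩
      show u 0 * ![t, (a + u 1 * t) / u 0] 1 - u 1 * ![t, (a + u 1 * t) / u 0] 0 = a
      simp only [Matrix.cons_val_one, Matrix.head_cons, Matrix.cons_val_zero]
      field_simp
      ring
    · intro w hw
      rw [Finset.mem_filter] at hw
      have hw2 : u 0 * w 1 - u 1 * w 0 = a := hw.2
      funext i
      fin_cases i
      · simp
      · show (a + u 1 * w 0) / u 0 = w 1
        rw [div_eq_iff h0]; linear_combination -hw2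
    · intro t ht; simp
  · rw [← hFcard]
    apply Finset.card_bij' (fun w _ => w 1) (fun t _ => ![(u 0 * t - a) / u 1, t])
    · intro w hw; exact Finset.mem_univ _
    · intro t ht
      rw [Finset.mem_filter]
      refine ⟨Finset.mem_univ _, ?_⟩
      show u 0 * ![(u 0 * t - a) / u 1, t] 1 - u 1 * ![(u 0 * t - a) / u 1, t] 0 = a
      simp only [Matrix.cons_val_one, Matrix.head_cons, Matrix.cons_val_zero]
      field_simp
      ring
    · intro w hw
      rw [Finset.mem_filter] at hw
      have hw2 : u 0 * w 1 - u 1 * w 0 = a := hw.2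
      funext i
      fin_cases i
      · show (u 0 * w 1 - a) / u 1 = w 0
        rw [div_eq_iff h1]; linear_combination hw2
      · simp
    · intro t ht; simp

lemma nbcard (hF : Fintype.card F = 9) (u : Fin 2 → F) (hu : u ≠ 0) :
    (Finset.univ.filter (fun w : Fin 2 → F => omeg u w = 1 ∨ omeg u w = -1)).card = 18 := by
  classical
  rw [Finset.filter_or, Finset.card_union_of_disjoint, fibcard hF u hu, fibcard hF u hu]
  rw [Finset.disjoint_left]
  intro w hw1 hw2
  rw [Finset.mem_filter] at hw1 hw2
  exact one_ne_negone hF (hw1.2 ▸ hw2.2)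

lemma count_lemma (hF : Fintype.card F = 9)
    (n : ℕ) (hn : 33 ≤ n) (v : ℕ → (Fin 2 → F)) (ε : F) (hε : ε = 1 ∨ ε = -1)
    (h0 : ∀ p, p ≤ 2*n → v p ≠ 0)
    (hadj : ∀ p, p < 2*n → omeg (v (p+1)) (v p) = 1)
    (hper : ∀ i, i ≤ n → v (n + i) = ε • v i)
    (hF4 : ∀ p d, p ≤ n → 2 ≤ d → d ≤ n - 2 →
      omeg (v (p+d)) (v p) ≠ 1 ∧ omeg (v (p+d)) (v p) ≠ -1) :
    False := by
  classical
  have G : ∀ a b : ℕ, ∀ τ : F, 1 ≤ a → a ≤ n + 1 → a + 1 ≤ b → b + 3 ≤ a + n →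
      (τ = 1 ∨ τ = -1) → v b = τ • v a → False := by
    intro a b τ ha1 han hab hbn hτ hvb
    have hadj' : omeg (v a) (v (a - 1)) = 1 := by
      have h := hadj (a - 1) (by omega)
      rwa [show a - 1 + 1 = a by omega] at h
    have hval : omeg (v b) (v (a - 1)) = τ := by
      rw [hvb]
      show τ • v a 0 * v (a-1) 1 - τ • v a 1 * v (a-1) 0 = τ
      unfold omeg at hadj'
      simp only [smul_eq_mul]
      linear_combination τ * hadj'
    obtain ⟨hne1, hne2⟩ := hF4 (a - 1) (b - (a - 1)) (by omega) (by omega) (by omega)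
    rw [show a - 1 + (b - (a - 1)) = b by omega] at hne1 hne2
    rcases hτ with h | h
    · exact hne1 (by rw [hval, h])
    · exact hne2 (by rw [hval, h])
  have INJ : ∀ p q : ℕ, p < q → q < n → ∀ σ : F, (σ = 1 ∨ σ = -1) → v q ≠ σ • v p := by
    intro p q hpq hqn σ hσ hEq
    have hσσ : σ * σ = 1 := by rcases hσ with rfl | rfl <;> ring
    by_cases hC : p + n ≤ q + 2
    · have hvp : σ • v q = v p := by rw [hEq, smul_smul, hσσ, one_smul]
      have hkey : v (n + p) = (ε * σ) • v q := by
        rw [hper p (by omega), ← hvp, smul_smul]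
      have hεσ : ε * σ = 1 ∨ ε * σ = -1 := by
        rcases hε with rfl | rfl <;> rcases hσ with rfl | rfl <;> norm_num
      exact G q (n + p) (ε * σ) (by omega) (by omega) (by omega) (by omega) hεσ hkey
    · by_cases hp : 1 ≤ p
      · exact G p q σ hp (by omega) (by omega) (by omega) hσ hEq
      · have hp0 : p = 0 := by omega
        subst hp0
        have hkey : v (n + q) = σ • v n := by
          have h1 : v (n + q) = ε • v q := hper q (by omega)
          have h2 : v (n + 0) = ε • v 0 := hper 0 (by omega)
          rw [Nat.add_zero] at h2
          rw [h1, hEq, smul_smul, mul_comm, ← smul_smul, ← h2]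
        exact G n (n + q) σ (by omega) (by omega) (by omega) (by omega) hσ hkey
  have hVcard : Fintype.card (Fin 2 → F) = 81 := by
    rw [Fintype.card_fun, hF]; norm_num
  set A : ℕ → Finset (Fin 2 → F) := fun p => {v p, -v p} with hA
  set C : Finset (Fin 2 → F) := (Finset.range n).biUnion A with hCdef
  have hAcard : ∀ p, p ≤ 2*n → (A p).card = 2 := by
    intro p hp
    refine Finset.card_pair ?_
    intro hEq
    obtain ⟨i, hi⟩ := Function.ne_iff.mp (h0 p hp)
    have h2i : (2 : F) * v p i = 0 := by
      have := congrFun hEq i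
      rw [Pi.neg_apply] at this
      linear_combination this
    rcases mul_eq_zero.mp h2i with h | h
    · exact two_ne_zero' hF h
    · exact hi h
  have hdisj : ∀ p ∈ Finset.range n, ∀ q ∈ Finset.range n, p ≠ q → Disjoint (A p) (A q) := by
    intro p hp q hq hne
    rw [Finset.mem_range] at hp hq
    rw [Finset.disjoint_left]
    intro w hwp hwq
    simp only [hA, Finset.mem_insert, Finset.mem_singleton] at hwp hwq
    have hex : ∃ σ : F, (σ = 1 ∨ σ = -1) ∧ v q = σ • v p := by
      rcases hwp with rfl | rfl
      · rcases hwq with h2 | h2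
        · exact ⟨1, Or.inl rfl, by rw [one_smul]; exact h2.symm⟩
        · exact ⟨-1, Or.inr rfl, by rw [neg_smul, one_smul, h2, neg_neg]⟩
      · rcases hwq with h2 | h2
        · exact ⟨-1, Or.inr rfl, by rw [neg_smul, one_smul]; exact h2.symm⟩
        · exact ⟨1, Or.inl rfl, by rw [one_smul]; exact (neg_inj.mp h2).symm⟩
    obtain ⟨σ, hσ, hEq⟩ := hex
    have hσσ : σ * σ = 1 := by rcases hσ with rfl | rfl <;> ring
    rcases Nat.lt_or_ge p q with h | h
    · exact INJ p q h hq σ hσ hEq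
    · have hqp : q < p := by omega
      have hEq' : v p = σ • v q := by rw [hEq, smul_smul, hσσ, one_smul]
      exact INJ q p hqp hp σ hσ hEq'
  have hCcard : C.card = 2 * n := by
    rw [hCdef, Finset.card_biUnion hdisj]
    rw [Finset.sum_congr rfl (fun p hp => hAcard p
      (by rw [Finset.mem_range] at hp; omega))]
    simp [mul_comm]
  set Nb0 : Finset (Fin 2 → F) :=
    Finset.univ.filter (fun w => omeg (v 0) w = 1 ∨ omeg (v 0) w = -1) with hNb0
  set Nb1 : Finset (Fin 2 → F) :=
    Finset.univ.filter (fun w => omeg (v 1) w = 1 ∨ omeg (v 1) w = -1) with hNb1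
  have hNb0card : Nb0.card = 18 := nbcard hF (v 0) (h0 0 (by omega))
  have hNb1card : Nb1.card = 18 := nbcard hF (v 1) (h0 1 (by omega))
  have hInter : (Nb0 ∩ Nb1).card ≤ 4 := by
    have hmaps : ∀ w ∈ Nb0 ∩ Nb1, (omeg (v 0) w, omeg (v 1) w) ∈
        (({1,-1} : Finset F) ×ˢ ({1,-1} : Finset F)) := by
      intro w hw
      rw [Finset.mem_inter, hNb0, hNb1, Finset.mem_filter, Finset.mem_filter] at hw
      rw [Finset.mem_product]
      constructor <;> simp only [Finset.mem_insert, Finset.mem_singleton]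
      · exact hw.1.2
      · exact hw.2.2
    have hinj : Set.InjOn (fun w : Fin 2 → F => (omeg (v 0) w, omeg (v 1) w))
        ↑(Nb0 ∩ Nb1) := by
      intro w hw w' hw' hEq
      have e1 : omeg (v 0) w = omeg (v 0) w' := congrArg Prod.fst hEq
      have e2 : omeg (v 1) w = omeg (v 1) w' := congrArg Prod.snd hEq
      have e3 : omeg (v 1) (v 0) = 1 := hadj 0 (by omega)
      unfold omeg at e1 e2 e3
      funext i
      fin_cases i
      · show w 0 = w' 0
        linear_combination (-(w 0 - w' 0)) * e3 + (-(v 1 0)) * e1 + (v 0 0) * e2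
      · show w 1 = w' 1
        linear_combination (-(w 1 - w' 1)) * e3 + (-(v 1 1)) * e1 + (v 0 1) * e2
    have hle := Finset.card_le_card_of_injOn _ hmaps hinj
    refine hle.trans ?_
    rw [Finset.card_product]
    have h2 : ({1,-1} : Finset F).card ≤ 2 :=
      le_trans (Finset.card_insert_le _ _) (by simp)
    calc ({1,-1} : Finset F).card * ({1,-1} : Finset F).card ≤ 2 * 2 :=
          Nat.mul_le_mul h2 h2
      _ = 4 := rfl
  set T : Finset (Fin 2 → F) :=
    {v 0, -v 0, v 1, -v 1, v 2, -v 2, v (n-1), -v (n-1)} with hT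
  have hsub : (Nb0 ∪ Nb1) ∩ C ⊆ T := by
    intro w hw
    rw [Finset.mem_inter] at hw
    obtain ⟨hw1, hw2⟩ := hw
    rw [hCdef, Finset.mem_biUnion] at hw2
    obtain ⟨q, hqmem, hwq⟩ := hw2
    rw [Finset.mem_range] at hqmem
    simp only [hA, Finset.mem_insert, Finset.mem_singleton] at hwq
    have hval : ∀ p, (omeg (v p) w = 1 ∨ omeg (v p) w = -1) →
        (omeg (v q) (v p) = 1 ∨ omeg (v q) (v p) = -1) := by
      intro p hp
      have hs : omeg (v q) (v p) = - omeg (v p) (v q) := by unfold omeg; ring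
      rcases hwq with rfl | rfl
      · rcases hp with h | h
        · right; rw [hs, h]
        · left; rw [hs, h, neg_neg]
      · have hn' : omeg (v p) (-v q) = - omeg (v p) (v q) := by
          unfold omeg; simp only [Pi.neg_apply]; ring
        rw [hn'] at hp
        rcases hp with h | h
        · left; rw [hs]; exact h
        · right; rw [hs]; exact h
    by_cases hq0 : q = 0
    · subst hq0; rcases hwq with rfl | rfl <;> simp [hT]
    by_cases hq1 : q = 1
    · subst hq1; rcases hwq with rfl | rfl <;> simp [hT]
    by_cases hq2 : q = 2
    · subst hq2; rcases hwq with rfl | rfl <;> simp [hT]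
    by_cases hqn : q = n - 1
    · subst hqn; rcases hwq with rfl | rfl <;> simp [hT]
    exfalso
    have hq3 : 3 ≤ q := by omega
    have hqn2 : q ≤ n - 2 := by omega
    rw [Finset.mem_union] at hw1
    rcases hw1 with hw0 | hw1'
    · rw [hNb0, Finset.mem_filter] at hw0
      have hv := hval 0 hw0.2
      have h4 := hF4 0 q (by omega) (by omega) hqn2
      rw [Nat.zero_add] at h4
      rcases hv with h | h
      · exact h4.1 h
      · exact h4.2 h
    · rw [hNb1, Finset.mem_filter] at hw1'
      have hv := hval 1 hw1'.2
      have h4 := hF4 1 (q - 1) (by omega) (by omega) (by omega)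
      rw [show 1 + (q - 1) = q by omega] at h4
      rcases hv with h | h
      · exact h4.1 h
      · exact h4.2 h
  have hT8 : T.card ≤ 8 := by
    rw [hT]
    refine le_trans (Finset.card_insert_le _ _) (Nat.add_le_add_right ?_ 1)
    refine le_trans (Finset.card_insert_le _ _) (Nat.add_le_add_right ?_ 1)
    refine le_trans (Finset.card_insert_le _ _) (Nat.add_le_add_right ?_ 1)
    refine le_trans (Finset.card_insert_le _ _) (Nat.add_le_add_right ?_ 1)
    refine le_trans (Finset.card_insert_le _ _) (Nat.add_le_add_right ?_ 1)
    refine le_trans (Finset.card_insert_le _ _) (Nat.add_le_add_right ?_ 1)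
    refine le_trans (Finset.card_insert_le _ _) (Nat.add_le_add_right ?_ 1)
    simp
  have hUcard := Finset.card_union_add_card_inter Nb0 Nb1
  have hIC : ((Nb0 ∪ Nb1) ∩ C).card ≤ 8 := le_trans (Finset.card_le_card hsub) hT8
  have hsdiff := Finset.card_inter_add_card_sdiff (Nb0 ∪ Nb1) C
  have hdisjCD : Disjoint C ((Nb0 ∪ Nb1) \ C) := Finset.disjoint_sdiff
  have hle : (C ∪ ((Nb0 ∪ Nb1) \ C)).card ≤ 81 := by
    calc (C ∪ ((Nb0 ∪ Nb1) \ C)).card ≤ Fintype.card (Fin 2 → F) :=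
          Finset.card_le_univ _
      _ = 81 := hVcard
  rw [Finset.card_union_of_disjoint hdisjCD, hCcard] at hle
  omega

end count
end QAux19

open QAux19 in
/-- Every irreducible λ-quiddity over the field with 9 elements has size at most 32. -/
theorem stmt19 {F : Type*} [Field F] [Fintype F] (hF : Fintype.card F = 9)
    (c : List F) (hc : IrreducibleQuiddity (Set.univ : Set F) c) :
    c.length ≤ 32 := by
  classical
  by_contra hbig
  push_neg at hbig
  obtain ⟨⟨hmem, hprod⟩, hlen3, hnred⟩ := hc
  set n := c.length with hn
  have hn33 : 33 ≤ n := hbig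
  set e := c ++ c with he
  have helen : e.length = 2 * n := by rw [he, List.length_append]; omega
  set P : ℕ → Matrix (Fin 2) (Fin 2) F := fun i => mProd (e.take i) with hP
  set v : ℕ → (Fin 2 → F) := fun i j => P i 1 j with hv
  have hPdet : ∀ i, (P i).det = 1 := fun i => det_mProd _
  -- step relation
  have hstep : ∀ i, i < 2*n → ∀ j : Fin 2, v (i+1) j = P i 0 j := by
    intro i hi j
    have hie : i < e.length := by omega
    have htake : e.take (i+1) = e.take i ++ [e[i]] := by
      rw [List.take_succ, List.getElem?_eq_getElem hie, Option.toList_some]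
    have hPi : P (i+1) = mMat (e[i]) * P i := by
      rw [hP]
      show mProd (e.take (i+1)) = _
      rw [htake, mProd_append, mProd_singleton]
    show P (i+1) 1 j = P i 0 j
    rw [hPi]
    simp [mMat, Matrix.mul_apply, Fin.sum_univ_two]
  have hadj : ∀ p, p < 2*n → omeg (v (p+1)) (v p) = 1 := by
    intro p hp
    unfold omeg
    rw [hstep p hp 0, hstep p hp 1]
    show P p 0 0 * P p 1 1 - P p 0 1 * P p 1 0 = 1
    rw [← Matrix.det_fin_two]
    exact hPdet p
  have h0 : ∀ p, p ≤ 2*n → v p ≠ 0 := by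
    intro p _ hzero
    have hd := hPdet p
    rw [Matrix.det_fin_two] at hd
    have h10 : P p 1 0 = 0 := by
      have := congrFun hzero 0; simpa [hv] using this
    have h11 : P p 1 1 = 0 := by
      have := congrFun hzero 1; simpa [hv] using this
    rw [h10, h11] at hd
    simp at hd
  -- periodicity
  have hPc : mProd c = P n := by
    have htc : (c ++ c).take n = c := by
      rw [List.take_append, hn]
      simp
    show mProd c = mProd (e.take n)
    rw [he, htc]
  obtain ⟨ε, hε, hmc⟩ : ∃ ε : F, (ε = 1 ∨ ε = -1) ∧ mProd c = ε • 1 := by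
    rcases hprod with h | h
    · exact ⟨1, Or.inl rfl, by rw [h, one_smul]⟩
    · exact ⟨-1, Or.inr rfl, by rw [h]; simp⟩
  have hper : ∀ i, i ≤ n → v (n + i) = ε • v i := by
    intro i hi
    have htake1 : e.take (n + i) = c ++ c.take i := by
      rw [he, List.take_append]
      congr 1
      · exact List.take_of_length_le (by omega)
      · congr 1; omega
    have htake2 : e.take i = c.take i := by
      rw [he, List.take_append]
      rw [show i - c.length = 0 by omega]
      simp
    have hPni : P (n + i) = ε • P i := by
      rw [hP]
      show mProd (e.take (n+i)) = ε • mProd (e.take i)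
      rw [htake1, htake2, mProd_append, hmc, Matrix.mul_smul, mul_one]
    funext j
    show P (n+i) 1 j = (ε • v i) j
    rw [hPni]
    simp [hv, Matrix.smul_apply]
  -- the main constraint from irreducibility
  have hF4 : ∀ p d, p ≤ n → 2 ≤ d → d ≤ n - 2 →
      omeg (v (p+d)) (v p) ≠ 1 ∧ omeg (v (p+d)) (v p) ≠ -1 := by
    intro p d hp hd2 hdn
    set k := d - 1 with hk
    have hk1 : 1 ≤ k := by omega
    have hk3 : k + 3 ≤ n := by omega
    have hseg : (c.rotate p).take k = (e.drop p).take k := by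
      rw [he]
      exact seg_eq c p k (by omega) (by omega)
    have hPk : P (p + k) = mProd ((e.drop p).take k) * P p := by
      rw [hP]
      show mProd (e.take (p+k)) = _
      rw [List.take_add, mProd_append]
    have hS00 : mProd ((c.rotate p).take k) 0 0 = omeg (v (p+d)) (v p) := by
      rw [hseg]
      have hL := entry_L (mProd ((e.drop p).take k)) (P p) (P (p+k)) hPk (hPdet p)
      rw [hL]
      unfold omeg
      have hpk : p + k < 2*n := by omega
      rw [← hstep (p+k) hpk 0, ← hstep (p+k) hpk 1]
      rw [show p + k + 1 = p + d by omega]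
    constructor <;> intro hval <;>
      exact hnred (reducible_of_segment c p k hk1 (by omega)
        (by rw [hS00, hval]; simp))
  exact count_lemma hF n hn33 v ε hε h0 hadj hper hF4
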